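/- Let K be a field and let f, g ∈ K[X] be full polynomials (f.coeff 0 ≠ 0 and g.coeff 0 ≠ 0). Suppose q, r ∈ K[X] and e : ℕ satisfy f = g * q + X^e * r. Then gcd f g is associated (equal up to a unit) to gcd g r. (Hence replacing the pair (f, g) by (g, r), where r is the trail remainder of f by g with the superfluous power of X removed, preserves the gcd; this is the correctness of one step of the generalized subresultant gcd algorithm.) -/
import Mathlib


open Polynomial

/-- Correctness of one step of the generalized subresultant gcd algorithm: if `f`, `g`
are full and `f = g * q + X^e * r`, then `gcd f g` is associated to `gcd g r`. -/
theorem gcd_step_associated {K : Type*} [Field K] [DecidableEq K]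
    (f g : K[X]) (hf0 : f.coeff 0 ≠ 0) (hg0 : g.coeff 0 ≠ 0)
    (q r : K[X]) (e : ℕ) (h : f = g * q + X ^ e * r) :
    Associated (EuclideanDomain.gcd f g) (EuclideanDomain.gcd g r) := by
  set d1 := EuclideanDomain.gcd f g with hd1
  set d2 := EuclideanDomain.gcd g r with hd2
  have hd1f : d1 ∣ f := EuclideanDomain.gcd_dvd_left f g
  have hd1g : d1 ∣ g := EuclideanDomain.gcd_dvd_right f g
  have hd1Xr : d1 ∣ X ^ e * r := by
    have : X ^ e * r = f - g * q := by rw [h]; ring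
    rw [this]
    exact dvd_sub hd1f (hd1g.mul_right q)
  have hXd1 : ¬ (X : K[X]) ∣ d1 := fun hx => hf0 (X_dvd_iff.mp (hx.trans hd1f))
  have hcop : IsCoprime (X ^ e : K[X]) d1 :=
    (((Polynomial.prime_X.coprime_iff_not_dvd).mpr hXd1).pow_left)
  have hd1r : d1 ∣ r := hcop.symm.dvd_of_dvd_mul_left hd1Xr
  have h12 : d1 ∣ d2 := EuclideanDomain.dvd_gcd hd1g hd1r
  have hd2g : d2 ∣ g := EuclideanDomain.gcd_dvd_left g r
  have hd2r : d2 ∣ r := EuclideanDomain.gcd_dvd_right g r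
  have hd2f : d2 ∣ f := by
    rw [h]; exact dvd_add (hd2g.mul_right q) (hd2r.mul_left _)
  exact associated_of_dvd_dvd h12 (EuclideanDomain.dvd_gcd hd2f hd2g)
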